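/- arXiv:1906.00712 — 2 statements merged into one kernel-verified Lean document; each statement's English description precedes it below -/
import Mathlib

section
/- (Furstenberg Intersection Lemma) Let (X,T) be a system with T abelian such that N_T(U,V) ∩ N_T(U,U) ≠ ∅ for every pair of nonempty open sets U,V ⊆ X. Then for all nonempty open U₁,V₁,U₂,V₂ ⊆ X there exist nonempty open sets U₃,V₃ ⊆ X such that N_T(U₃,V₃) ⊆ N_T(U₁,V₁) ∩ N_T(U₂,V₂). -/
/-- Furstenberg Intersection Lemma. -/
theorem furstenberg_intersection {T X : Type*} [CommMonoid T] [TopologicalSpace X]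
    [MulAction T X] (hc : ∀ t : T, Continuous fun x : X => t • x)
    (h : ∀ U V : Set X, IsOpen U → U.Nonempty → IsOpen V → V.Nonempty →
      ({t : T | ((fun x : X => t • x) '' U ∩ V).Nonempty}
        ∩ {t : T | ((fun x : X => t • x) '' U ∩ U).Nonempty}).Nonempty) :
    ∀ U₁ V₁ U₂ V₂ : Set X, IsOpen U₁ → U₁.Nonempty → IsOpen V₁ → V₁.Nonempty →
      IsOpen U₂ → U₂.Nonempty → IsOpen V₂ → V₂.Nonempty →
      ∃ U₃ V₃ : Set X, IsOpen U₃ ∧ U₃.Nonempty ∧ IsOpen V₃ ∧ V₃.Nonempty ∧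
        {t : T | ((fun x : X => t • x) '' U₃ ∩ V₃).Nonempty}
          ⊆ {t : T | ((fun x : X => t • x) '' U₁ ∩ V₁).Nonempty}
            ∩ {t : T | ((fun x : X => t • x) '' U₂ ∩ V₂).Nonempty} := by
  -- restate the hypothesis in pointwise form
  have h' : ∀ U V : Set X, IsOpen U → U.Nonempty → IsOpen V → V.Nonempty →
      ∃ t : T, (∃ x ∈ U, t • x ∈ V) ∧ (∃ x ∈ U, t • x ∈ U) := by
    intro U V hU hUn hV hVn
    obtain ⟨t, h1, h2⟩ := h U V hU hUn hV hVn
    obtain ⟨y1, ⟨x1, hx1, hy1⟩, hy1V⟩ := h1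
    obtain ⟨y2, ⟨x2, hx2, hy2⟩, hy2U⟩ := h2
    exact ⟨t, ⟨x1, hx1, by simpa [hy1] using hy1V⟩, ⟨x2, hx2, by simpa [hy2] using hy2U⟩⟩
  have hpre : ∀ (s : T) (W : Set X), IsOpen W → IsOpen ((fun x : X => s • x) ⁻¹' W) :=
    fun s W hW => hW.preimage (hc s)
  -- Step 1 : for all nonempty open P Q R there is t ∈ N(P,Q) ∩ N(R,R)
  have step1 : ∀ P Q R : Set X, IsOpen P → P.Nonempty → IsOpen Q → Q.Nonempty →
      IsOpen R → R.Nonempty →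
      ∃ t : T, (∃ x ∈ P, t • x ∈ Q) ∧ (∃ x ∈ R, t • x ∈ R) := by
    intro P Q R hP hPn hQ hQn hR hRn
    obtain ⟨t₁, ⟨x₁, hx₁P, hx₁R⟩, -⟩ := h' P R hP hPn hR hRn
    have hP₁ : IsOpen (P ∩ (fun x : X => t₁ • x) ⁻¹' R) := hP.inter (hpre t₁ R hR)
    have hP₁n : (P ∩ (fun x : X => t₁ • x) ⁻¹' R).Nonempty := ⟨x₁, hx₁P, hx₁R⟩
    obtain ⟨t₂, ⟨x, hx, hxQ⟩, ⟨y, hy, hy'⟩⟩ :=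
      h' (P ∩ (fun x : X => t₁ • x) ⁻¹' R) Q hP₁ hP₁n hQ hQn
    refine ⟨t₂, ⟨x, hx.1, hxQ⟩, ⟨t₁ • y, hy.2, ?_⟩⟩
    have hcomm : t₂ • t₁ • y = t₁ • t₂ • y := by
      rw [smul_smul, mul_comm, ← smul_smul]
    rw [hcomm]
    exact hy'.2
  -- Step 2 : for all nonempty open A B C D there is s ∈ N(A,B) ∩ N(C,D)
  have step2 : ∀ A B C D : Set X, IsOpen A → A.Nonempty → IsOpen B → B.Nonempty →
      IsOpen C → C.Nonempty → IsOpen D → D.Nonempty →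
      ∃ s : T, (∃ x ∈ A, s • x ∈ B) ∧ (∃ x ∈ C, s • x ∈ D) := by
    intro A B C D hA hAn hB hBn hC hCn hD hDn
    obtain ⟨r, ⟨xc, hxcC, hxcD⟩, ⟨xb, hxbB, hxbB'⟩⟩ := step1 C D B hC hCn hD hDn hB hBn
    have hE : IsOpen (C ∩ (fun x : X => r • x) ⁻¹' D) := hC.inter (hpre r D hD)
    have hEn : (C ∩ (fun x : X => r • x) ⁻¹' D).Nonempty := ⟨xc, hxcC, hxcD⟩
    have hF : IsOpen ((fun x : X => r • x) ⁻¹' B) := hpre r B hB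
    have hFn : ((fun x : X => r • x) ⁻¹' B).Nonempty := ⟨xb, hxbB'⟩
    obtain ⟨t, ⟨x, hxA, hxF⟩, ⟨y, hyE, hy'E⟩⟩ :=
      step1 A ((fun x : X => r • x) ⁻¹' B) (C ∩ (fun x : X => r • x) ⁻¹' D)
        hA hAn hF hFn hE hEn
    refine ⟨r * t, ⟨x, hxA, ?_⟩, ⟨y, hyE.1, ?_⟩⟩
    · rw [mul_smul]; exact hxF
    · rw [mul_smul]; exact hy'E.2
  -- Main proof
  intro U₁ V₁ U₂ V₂ hU₁ hU₁n hV₁ hV₁n hU₂ hU₂n hV₂ hV₂n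
  obtain ⟨s, ⟨xu, hxuU₁, hxuU₂⟩, ⟨xv, hxvV₁, hxvV₂⟩⟩ :=
    step2 U₁ U₂ V₁ V₂ hU₁ hU₁n hU₂ hU₂n hV₁ hV₁n hV₂ hV₂n
  refine ⟨U₁ ∩ (fun x : X => s • x) ⁻¹' U₂, V₁ ∩ (fun x : X => s • x) ⁻¹' V₂,
    hU₁.inter (hpre s U₂ hU₂), ⟨xu, hxuU₁, hxuU₂⟩,
    hV₁.inter (hpre s V₂ hV₂), ⟨xv, hxvV₁, hxvV₂⟩, ?_⟩
  rintro t ⟨y, ⟨x, hxU₃, rfl⟩, hyV₃⟩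
  constructor
  · exact ⟨t • x, ⟨x, hxU₃.1, rfl⟩, hyV₃.1⟩
  · refine ⟨t • (s • x), ⟨s • x, hxU₃.2, rfl⟩, ?_⟩
    have hcomm : t • s • x = s • t • x := by
      rw [smul_smul, mul_comm, ← smul_smul]
    rw [hcomm]
    exact hyV₃.2
end

section
/- For a semiflow (X,S), the following are equivalent: (1) (X,S) is strongly product transitive, i.e. the diagonal action of S on X^k is strongly transitive for every k ∈ ℕ; (2) the collection {N_S(U,x) : x ∈ X, U nonempty open in X} of hitting sets generates a filter of subsets of S, i.e. every finite intersection of such sets contains a set of the same form and in particular is nonempty. -/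
/-- A semiflow is strongly product transitive iff the collection of hitting sets
N_S(U,x) has the finite intersection property (generates a filter). -/
theorem stronglyProductTransitive_iff_filter {S X : Type*} [Monoid S] [TopologicalSpace X]
    [MulAction S X] (hc : ∀ s : S, Continuous fun x : X => s • x) :
    (∀ k : ℕ, ∀ x : Fin k → X,
        Dense {y : Fin k → X | ∃ s : S, s • y = x})
      ↔ (∀ (n : ℕ) (U : Fin n → Set X) (x : Fin n → X),
          (∀ i, IsOpen (U i)) → (∀ i, (U i).Nonempty) →
          (⋂ i, {s : S | x i ∈ (fun z : X => s • z) '' U i}).Nonempty) := by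
  constructor
  · intro h n U x hUo hUne
    have hd := h n x
    have hVo : IsOpen (Set.pi Set.univ U) :=
      isOpen_set_pi Set.finite_univ (fun i _ => hUo i)
    have hVne : (Set.pi Set.univ U).Nonempty := by
      choose z hz using hUne
      exact ⟨z, fun i _ => hz i⟩
    obtain ⟨y, hy, hyV⟩ := hd.exists_mem_open hVo hVne
    obtain ⟨s, hs⟩ := hy
    refine ⟨s, Set.mem_iInter.2 fun i => ?_⟩
    exact ⟨y i, hyV i (Set.mem_univ i), by
      have := congrFun hs i
      simpa using this⟩
  · intro h k x
    rw [dense_iff_inter_open]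
    intro V hV hVne
    obtain ⟨f, hf⟩ := hVne
    obtain ⟨I, u, hu, hsub⟩ := (isOpen_pi_iff.1 hV) f hf
    set U : Fin k → Set X := fun i => if i ∈ I then u i else Set.univ with hU
    have hUo : ∀ i, IsOpen (U i) := by
      intro i; by_cases hi : i ∈ I
      · simpa [hU, hi] using (hu i hi).1
      · simp [hU, hi]
    have hUne : ∀ i, (U i).Nonempty := by
      intro i; by_cases hi : i ∈ I
      · exact ⟨f i, by simp [hU, hi, (hu i hi).2]⟩
      · exact ⟨f i, by simp [hU, hi]⟩
    obtain ⟨s, hs⟩ := h k U x hUo hUne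
    simp only [Set.mem_iInter, Set.mem_setOf_eq] at hs
    choose z hzU hzx using hs
    refine ⟨z, ?_, s, funext hzx⟩
    apply hsub
    intro i hi
    have := hzU i
    rw [hU] at this
    simp only at this
    rwa [if_pos (Finset.mem_coe.1 hi)] at this
end
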